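/- Let p be a prime and A any nonzero ideal of O = Z[ξ_p], regarded as a Z[G]-module via multiplication by ξ_p for a generator of the cyclic group G of order p. Then A ⊗ F_p is isomorphic as an F_p[G]-module to N_{p−1}, the unipotent Jordan block of size p−1. -/

import Mathlib

open scoped TensorProduct

/-- The unipotent Jordan block of size `q` over `𝔽ₚ`. -/
def jordanBlock (p q : ℕ) : Matrix (Fin q) (Fin q) (ZMod p) :=
  Matrix.of fun i j => if j = i then 1 else if (i : ℕ) + 1 = (j : ℕ) then 1 else 0

lemma jordan_aux (p n : ℕ) [Fact p.Prime] (hn : 0 < n)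
    (V : Type) [AddCommGroup V] [Module (ZMod p) V]
    (hdim : Module.finrank (ZMod p) V = n)
    (t : V →ₗ[ZMod p] V) (h1 : t ^ n = 0) (h2 : t ^ (n - 1) ≠ 0) :
    ∃ e : V ≃ₗ[ZMod p] (Fin n → ZMod p),
      ∀ v, e (t v + v) = Matrix.toLin' (jordanBlock p n) (e v) := by
  obtain ⟨v, hv⟩ : ∃ v, (t ^ (n - 1)) v ≠ 0 := by
    by_contra hcon
    push_neg at hcon
    exact h2 (LinearMap.ext fun x => by simpa using hcon x)
  have hbig : ∀ k, n ≤ k → (t ^ k : V →ₗ[ZMod p] V) = 0 := by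
    intro k hk
    rw [show k = (k - n) + n by omega, pow_add, h1, mul_zero]
  set g : Fin n → V := fun j => (t ^ (n - 1 - (j : ℕ))) v with hg
  have li : LinearIndependent (ZMod p) g := by
    rw [Fintype.linearIndependent_iff]
    intro c hc
    by_contra hcon
    push_neg at hcon
    obtain ⟨i0, hi0⟩ := hcon
    set S := Finset.univ.filter (fun j : Fin n => c j ≠ 0) with hS
    have hSne : S.Nonempty := ⟨i0, by simp [hS, hi0]⟩
    obtain ⟨m, hmS, hmax⟩ := S.exists_max_image (fun j : Fin n => (j : ℕ)) hSne
    have hcm : c m ≠ 0 := (Finset.mem_filter.mp hmS).2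
    have h0 : (t ^ (m : ℕ)) (∑ j, c j • g j) = 0 := by rw [hc, map_zero]
    rw [map_sum] at h0
    simp only [map_smul] at h0
    have hterm : ∀ j : Fin n,
        (t ^ (m : ℕ)) (g j) = (t ^ ((m : ℕ) + (n - 1 - (j : ℕ)))) v := by
      intro j
      rw [hg, pow_add, Module.End.mul_apply]
    have hsum : ∑ j, c j • (t ^ (m : ℕ)) (g j) = c m • (t ^ (n - 1)) v := by
      rw [Finset.sum_eq_single m]
      · rw [hterm, show (m : ℕ) + (n - 1 - (m : ℕ)) = n - 1 by omega]
      · intro j _ hj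
        by_cases hcj : c j = 0
        · simp [hcj]
        · have hjS : j ∈ S := by simp [hS, hcj]
          have hjm : (j : ℕ) < (m : ℕ) :=
            lt_of_le_of_ne (hmax j hjS) (fun h => hj (Fin.ext h))
          rw [hterm, hbig ((m : ℕ) + (n - 1 - (j : ℕ))) (by omega)]
          simp
      · intro h; exact absurd (Finset.mem_univ m) h
    rw [hsum] at h0
    rcases smul_eq_zero.mp h0 with h | h
    · exact hcm h
    · exact hv h
  haveI : Nonempty (Fin n) := ⟨⟨0, hn⟩⟩
  set b := basisOfLinearIndependentOfCardEqFinrank li (by simp [hdim]) with hbdef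
  have hb : ⇑b = g := coe_basisOfLinearIndependentOfCardEqFinrank li _
  refine ⟨b.equivFun, ?_⟩
  have main : (b.equivFun.toLinearMap ∘ₗ (t + LinearMap.id)) =
      (Matrix.toLin' (jordanBlock p n)) ∘ₗ b.equivFun.toLinearMap := by
    apply b.ext
    intro i
    have hbi : b i = (t ^ (n - 1 - (i : ℕ))) v := by rw [hb]
    have htb : t (b i) = (if h : (i : ℕ) = 0 then 0 else b ⟨(i : ℕ) - 1, by omega⟩) := by
      by_cases h : (i : ℕ) = 0
      · rw [dif_pos h, hbi, h]
        have : t ((t ^ (n - 1 - 0)) v) = (t ^ n) v := by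
          rw [← Module.End.mul_apply, ← pow_succ']
          congr 1
          congr 1
          omega
        rw [this, h1]; rfl
      · rw [dif_neg h, hbi, hb]
        show t ((t ^ (n - 1 - (i : ℕ))) v) = (t ^ (n - 1 - ((i : ℕ) - 1))) v
        rw [← Module.End.mul_apply, ← pow_succ']
        congr 2
        omega
    simp only [LinearMap.comp_apply, LinearMap.add_apply, LinearMap.id_apply,
      LinearEquiv.coe_toLinearMap, map_add]
    funext r
    rw [Matrix.toLin'_apply]
    simp only [Pi.add_apply]
    rw [Module.Basis.equivFun_self]
    have hmul : (jordanBlock p n).mulVec (b.equivFun (b i)) r = jordanBlock p n r i := by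
      unfold Matrix.mulVec dotProduct
      rw [Finset.sum_eq_single i]
      · rw [Module.Basis.equivFun_self, if_pos rfl, mul_one]
      · intro j _ hj
        rw [Module.Basis.equivFun_self, if_neg (Ne.symm hj), mul_zero]
      · intro h; exact absurd (Finset.mem_univ i) h
    rw [hmul]
    by_cases h : (i : ℕ) = 0
    · rw [htb, dif_pos h]
      simp only [map_zero, Pi.zero_apply, zero_add, jordanBlock, Matrix.of_apply]
      rcases eq_or_ne i r with hir | hir
      · subst hir; rw [if_pos rfl, if_pos rfl]
      · rw [if_neg hir, if_neg hir,
          if_neg (show ¬((r : ℕ) + 1 = (i : ℕ)) by omega)]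
    · rw [htb, dif_neg h, Module.Basis.equivFun_self]
      simp only [jordanBlock, Matrix.of_apply]
      have he : ((⟨(i : ℕ) - 1, by omega⟩ : Fin n) = r) ↔ ((r : ℕ) + 1 = (i : ℕ)) := by
        rw [Fin.ext_iff]; simp only []; omega
      rcases eq_or_ne i r with hir | hir
      · subst hir
        rw [if_pos rfl, if_pos rfl, if_neg (fun hh => by rw [he] at hh; omega), zero_add]
      · rw [if_neg hir, if_neg hir, add_zero]
        by_cases hr : (r : ℕ) + 1 = (i : ℕ)
        · rw [if_pos (he.mpr hr), if_pos hr]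
        · rw [if_neg (fun hh => hr (he.mp hh)), if_neg hr]
  intro w
  have := LinearMap.congr_fun main w
  simpa using this

/-- Lemma: let `O = ℤ[ξ_p]` (characteristic-zero domain generated over `ℤ` by a
primitive `p`-th root of unity `ζ`) and `A` a nonzero ideal of `O`, regarded as a
`ℤ[G]`-module where a generator `φ` of the cyclic group `G` of order `p` acts by
multiplication by `ζ`.  Then `A ⊗ 𝔽ₚ` is isomorphic as an `𝔽ₚ[G]`-module to
`N_{p-1}`, the unipotent Jordan block of size `p - 1`. -/
theorem tensor_ideal_isJordanBlock_pred
    (p : ℕ) (hp : p.Prime)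
    (O : Type) [CommRing O] [IsDomain O] [CharZero O]
    (ζ : O) (hζ : IsPrimitiveRoot ζ p) (hO : Algebra.adjoin ℤ {ζ} = ⊤)
    (A : Ideal O) (hA : A ≠ ⊥)
    (φ : A →ₗ[ℤ] A) (hφ : ∀ x : A, (φ x : O) = ζ * (x : O)) :
    ∃ e : (ZMod p ⊗[ℤ] A) ≃ₗ[ZMod p] (Fin (p - 1) → ZMod p),
      ∀ v, e (LinearMap.baseChange (ZMod p) φ v) =
        Matrix.toLin' (jordanBlock p (p - 1)) (e v) := by
  haveI : Fact p.Prime := ⟨hp⟩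
  have hp2 : 2 ≤ p := hp.two_le
  set π : O := ζ - 1 with hπ
  have hζ1 : ζ ≠ 1 := by
    intro h
    have := hζ.unique ((h ▸ IsPrimitiveRoot.one) : IsPrimitiveRoot ζ 1)
    omega
  have hπ0 : π ≠ 0 := sub_ne_zero.mpr hζ1
  -- basis of O
  obtain ⟨bO⟩ : Nonempty (Module.Basis (Fin (p - 1)) ℤ O) := by
    have hint : IsIntegral ℤ ζ := hζ.isIntegral hp.pos
    have hmin : minpoly ℤ ζ = Polynomial.cyclotomic p ℤ := by
      let K := FractionRing O
      haveI : CharZero K := charZero_of_injective_algebraMap (IsFractionRing.injective O K)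
      have hK : IsPrimitiveRoot (algebraMap O K ζ) p :=
        hζ.map_of_injective (IsFractionRing.injective O K)
      letI : Algebra ℤ K := Ring.toIntAlgebra K
      rw [← minpoly.algebraMap_eq (IsFractionRing.injective O K) ζ]
      exact (Polynomial.cyclotomic_eq_minpoly hK hp.pos).symm
    have hdeg : (minpoly ℤ ζ).natDegree = p - 1 := by
      rw [hmin, Polynomial.natDegree_cyclotomic, Nat.totient_prime hp]
    let pb := Algebra.adjoin.powerBasis' hint
    let eqTop : (Algebra.adjoin ℤ ({ζ} : Set O)) ≃ₐ[ℤ] O :=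
      (Subalgebra.equivOfEq _ _ hO).trans Subalgebra.topEquiv
    exact ⟨(pb.basis.map eqTop.toLinearEquiv).reindex
      (finCongr (by rw [Algebra.adjoin.powerBasis'_dim, hdeg]))⟩
  haveI : Module.Finite ℤ O := Module.Finite.of_basis bO
  haveI : IsNoetherian ℤ O := isNoetherian_of_isNoetherianRing_of_finite ℤ O
  -- nonzero element of A
  obtain ⟨a, haA, ha0⟩ := (Submodule.ne_bot_iff (A : Submodule O O)).mp hA
  -- basis of A
  obtain ⟨m, bA0⟩ := Submodule.basisOfPid bO (A.restrictScalars ℤ)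
  let resEq : (A.restrictScalars ℤ) ≃ₗ[ℤ] A :=
    (Submodule.restrictScalarsEquiv ℤ O O (A : Submodule O O)).restrictScalars ℤ
  let bA1 := bA0.map resEq
  haveI : Module.Finite ℤ A := Module.Finite.of_basis bA1
  have hm : m = p - 1 := by
    have h1 : Module.finrank ℤ A = m := by
      rw [Module.finrank_eq_card_basis bA1, Fintype.card_fin]
    have h2 : Module.finrank ℤ O = p - 1 := by
      rw [Module.finrank_eq_card_basis bO, Fintype.card_fin]
    have hle1 : Module.finrank ℤ A ≤ Module.finrank ℤ O := by
      have hinj : Function.Injective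
          (((A.restrictScalars ℤ).subtype).comp resEq.symm.toLinearMap) :=
        (Submodule.injective_subtype _).comp resEq.symm.injective
      exact LinearMap.finrank_le_finrank_of_injective hinj
    have hle2 : Module.finrank ℤ O ≤ Module.finrank ℤ A := by
      let L2 : O →ₗ[ℤ] A :=
        { toFun := fun x => ⟨a * x, Ideal.mul_mem_right x A haA⟩
          map_add' := fun x y => Subtype.ext (by simp [mul_add])
          map_smul' := fun z x => Subtype.ext (by
            simp only [Submodule.coe_smul_of_tower, RingHom.id_apply, zsmul_eq_mul]
            ring) }
      have hinj : Function.Injective L2 := by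
        intro x y h
        exact mul_left_cancel₀ ha0 (congrArg Subtype.val h)
      exact LinearMap.finrank_le_finrank_of_injective hinj
    omega
  let bA : Module.Basis (Fin (p - 1)) ℤ A := bA1.reindex (finCongr hm)
  -- divisibility 2
  have hdvd2 : ∃ z : O, (p : O) = z * π ^ (p - 1) := by
    obtain ⟨z, _, hz⟩ := hζ.self_sub_one_pow_dvd_order (k := p - 1) (by omega)
    exact ⟨z, by exact_mod_cast hz⟩
  -- divisibility 1
  have hdvd1 : (p : O) ∣ π ^ (p - 1) := by
    have hζ' : IsPrimitiveRoot ζ ((p - 1) + 1) := by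
      rwa [show p - 1 + 1 = p by omega]
    have hprod := hζ'.prod_pow_sub_one_eq_order
    have hdd : ∀ k ∈ Finset.range (p - 1), (ζ ^ (k + 1) - 1) ∣ π := by
      intro k hk
      rw [Finset.mem_range] at hk
      have hcop : Nat.Coprime (k + 1) p := by
        refine Nat.Coprime.symm (hp.coprime_iff_not_dvd.mpr ?_)
        intro hdvd
        exact absurd (Nat.le_of_dvd (by omega) hdvd) (by omega)
      obtain ⟨j, -, hj⟩ := Nat.exists_mul_mod_eq_one_of_coprime hcop (by omega)
      have hpow : (ζ ^ (k + 1)) ^ j = ζ := by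
        rw [← pow_mul]
        have hmod : ζ ^ ((k + 1) * j) = ζ ^ (((k + 1) * j) % p) := by
          conv_lhs => rw [← Nat.div_add_mod ((k + 1) * j) p]
          rw [pow_add, pow_mul, hζ.pow_eq_one, one_pow, one_mul]
        rw [hmod, hj, pow_one]
      have := sub_dvd_pow_sub_pow (ζ ^ (k + 1)) 1 j
      rwa [hpow, one_pow] at this
    have hmain : (∏ k ∈ Finset.range (p - 1), (ζ ^ (k + 1) - 1)) ∣ π ^ (p - 1) := by
      have := Finset.prod_dvd_prod_of_dvd
        (fun k => ζ ^ (k + 1) - 1) (fun _ => π) hdd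
      rwa [Finset.prod_const, Finset.card_range] at this
    refine dvd_trans ?_ hmain
    have hcast : ((p - 1 : ℕ) : O) + 1 = (p : O) := by
      exact_mod_cast congrArg (Nat.cast : ℕ → O) (show p - 1 + 1 = p by omega)
    rw [hcast] at hprod
    refine Dvd.intro_left ((-1 : O) ^ (p - 1)) ?_
    calc (-1 : O) ^ (p - 1) * (p : O)
        = (-1 : O) ^ (p - 1) * ((-1 : O) ^ (p - 1) *
            ∏ k ∈ Finset.range (p - 1), (ζ ^ (k + 1) - 1)) := by rw [hprod]
      _ = ((-1 : O) ^ (p - 1) * (-1 : O) ^ (p - 1)) *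
            ∏ k ∈ Finset.range (p - 1), (ζ ^ (k + 1) - 1) := by ring
      _ = ∏ k ∈ Finset.range (p - 1), (ζ ^ (k + 1) - 1) := by
            rw [← pow_add, Even.neg_one_pow ⟨p - 1, rfl⟩, one_mul]
  -- p is not a unit in O
  have hpnotunit : ¬ ((p : O) ∣ 1) := by
    rintro ⟨u, hu⟩
    let i0 : Fin (p - 1) := ⟨0, by omega⟩
    have hb : bO i0 = (p : ℕ) • (u * bO i0) := by
      rw [nsmul_eq_mul, ← mul_assoc, ← hu, one_mul]
    have hco := congrArg (fun x => (bO.repr x) i0) hb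
    simp only [Module.Basis.repr_self, map_nsmul, Finsupp.smul_apply, Finsupp.single_eq_same,
      smul_eq_mul] at hco
    have hdvd : (p : ℤ) ∣ 1 := Dvd.intro _ hco.symm
    have := Int.le_of_dvd one_pos hdvd
    omega
  -- ψ = φ - id
  set ψ : A →ₗ[ℤ] A := φ - LinearMap.id with hψdef
  have hψ1 : ∀ x : A, ((ψ x : A) : O) = π * (x : O) := by
    intro x
    have : ((ψ x : A) : O) = (φ x : O) - (x : O) := by
      simp [hψdef]
    rw [this, hφ x, hπ]
    ring
  have hψk : ∀ (k : ℕ) (x : A), (((ψ ^ k) x : A) : O) = π ^ k * (x : O) := by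
    intro k
    induction k with
    | zero => intro x; simp
    | succ k ih =>
      intro x
      rw [pow_succ, Module.End.mul_apply, ih (ψ x), hψ1 x, pow_succ]
      ring
  set t := LinearMap.baseChange (ZMod p) ψ with htdef
  -- dimension
  let bV := bA.baseChange (ZMod p)
  have hdim : Module.finrank (ZMod p) (ZMod p ⊗[ℤ] A) = p - 1 := by
    rw [Module.finrank_eq_card_basis bV, Fintype.card_fin]
  -- t ^ (p-1) = 0
  obtain ⟨w, hw⟩ := hdvd1
  have h1 : t ^ (p - 1) = 0 := by
    let g : A →ₗ[ℤ] A :=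
      { toFun := fun x => ⟨w * (x : O), Ideal.mul_mem_left A w x.2⟩
        map_add' := fun x y => Subtype.ext (by simp [mul_add])
        map_smul' := fun z x => Subtype.ext (by
          simp only [Submodule.coe_smul_of_tower, RingHom.id_apply, zsmul_eq_mul]
          ring) }
    have hgp : ψ ^ (p - 1) = (p : ℤ) • g := by
      refine LinearMap.ext fun x => Subtype.ext ?_
      have hL : (((ψ ^ (p - 1)) x : A) : O) = π ^ (p - 1) * (x : O) := hψk _ x
      have hR : ((((p : ℤ) • g) x : A) : O) = (p : O) * (w * (x : O)) := by
        simp [g]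
      rw [hL, hR, hw]
      ring
    rw [htdef, ← LinearMap.baseChange_pow, hgp, LinearMap.baseChange_smul]
    refine LinearMap.ext fun v => ?_
    show (p : ℤ) • (LinearMap.baseChange (ZMod p) g v) = 0
    rw [← Int.cast_smul_eq_zsmul (ZMod p)]
    push_cast
    rw [ZMod.natCast_self, zero_smul]
  -- t ^ (p-2) ≠ 0
  obtain ⟨z, hz⟩ := hdvd2
  have h2 : t ^ (p - 1 - 1) ≠ 0 := by
    intro hzero
    rw [htdef, ← LinearMap.baseChange_pow] at hzero
    have key : ∀ x : A, ∃ y : A, ((ψ ^ (p - 1 - 1)) x) = (p : ℤ) • y := by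
      intro x
      have h0 : (1 : ZMod p) ⊗ₜ[ℤ] ((ψ ^ (p - 1 - 1)) x) = 0 := by
        have := LinearMap.congr_fun hzero ((1 : ZMod p) ⊗ₜ[ℤ] x)
        rwa [LinearMap.baseChange_tmul, LinearMap.zero_apply] at this
      set y := (ψ ^ (p - 1 - 1)) x with hy
      have hrep : ∀ i, ((bA.repr y i : ℤ) : ZMod p) = 0 := by
        intro i
        have hc := congrArg (fun u => (bV.repr u) i) h0
        simpa [bV, Module.Basis.baseChange_repr_tmul] using hc
      choose d hd using fun i => (ZMod.intCast_zmod_eq_zero_iff_dvd _ p).mp (hrep i)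
      refine ⟨∑ i, d i • bA i, ?_⟩
      conv_lhs => rw [← bA.sum_repr y]
      rw [Finset.smul_sum]
      refine Finset.sum_congr rfl fun i _ => ?_
      rw [hd i, mul_smul]
    have hsub : ∀ x : A, ∃ y' : A, (x : O) = π * (y' : O) := by
      intro x
      obtain ⟨y, hy⟩ := key x
      have hc : π ^ (p - 1 - 1) * (x : O) = (p : O) * (y : O) := by
        have hcoe : (((ψ ^ (p - 1 - 1)) x : A) : O) = (((p : ℤ) • y : A) : O) := by
          rw [hy]
        rw [hψk] at hcoe
        rw [hcoe, Submodule.coe_smul_of_tower, zsmul_eq_mul]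
        push_cast
        ring
      rw [hz] at hc
      have hpp : π ^ (p - 1) = π ^ (p - 1 - 1) * π := by
        rw [← pow_succ]
        congr 1
        omega
      rw [hpp] at hc
      have hc2 : π ^ (p - 1 - 1) * (x : O) = π ^ (p - 1 - 1) * (π * (z * (y : O))) := by
        rw [hc]; ring
      have hx := mul_left_cancel₀ (pow_ne_zero _ hπ0) hc2
      exact ⟨⟨z * (y : O), Ideal.mul_mem_left A z y.2⟩, hx⟩
    have hle : (A : Submodule O O) ≤ (Ideal.span {π}) • (A : Submodule O O) := by
      intro x hx
      obtain ⟨y', hy'⟩ := hsub ⟨x, hx⟩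
      have : x = π • (y' : O) := hy'
      rw [this]
      exact Submodule.smul_mem_smul (Ideal.mem_span_singleton_self π) y'.2
    have hfg : (A : Submodule O O).FG :=
      Submodule.FG.of_restrictScalars ℤ (IsNoetherian.noetherian (A.restrictScalars ℤ))
    obtain ⟨r, hr1, hr2⟩ :=
      Submodule.exists_sub_one_mem_and_smul_eq_zero_of_fg_of_le_smul
        (Ideal.span {π}) (A : Submodule O O) hfg hle
    have hr0 : r = 0 := by
      have hra := hr2 a haA
      rw [smul_eq_mul] at hra
      rcases mul_eq_zero.mp hra with h | h
      · exact h
      · exact absurd h ha0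
    rw [hr0, zero_sub] at hr1
    have h1mem : (1 : O) ∈ Ideal.span {π} := by
      have := (Ideal.span {π}).neg_mem hr1
      simpa using this
    have hπdvd : π ∣ 1 := Ideal.mem_span_singleton.mp h1mem
    have : π ^ (p - 1) ∣ 1 := by
      have := pow_dvd_pow_of_dvd hπdvd (p - 1)
      rwa [one_pow] at this
    exact hpnotunit (dvd_trans ⟨w, hw⟩ this)
  -- assemble
  have hft : ∀ v : ZMod p ⊗[ℤ] A, LinearMap.baseChange (ZMod p) φ v = t v + v := by
    intro v
    rw [htdef, hψdef, LinearMap.baseChange_sub, LinearMap.baseChange_id]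
    simp
  obtain ⟨e, he⟩ := jordan_aux p (p - 1) (by omega) _ hdim t h1 h2
  exact ⟨e, fun v => by rw [hft v]; exact he v⟩
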